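/- arXiv:2208.12947 — 7 statements merged into one kernel-verified Lean document; each statement's English description precedes it below -/
import Mathlib

section
/- For k ≥ 2 and q > 0, if (m_0,...,m_{j-1}, 0, m_{j+1},...,m_k) and (m_0,...,m_{j-2}, m_{j-1}+m_{j+1}, m_{j+2},...,m_k) are both paths for q with 1 ≤ j ≤ k-1, then c(q, (m_0,...,m_{j-1}, 0, m_{j+1},...,m_k)) = c(q, (m_0,...,m_{j-2}, m_{j-1}+m_{j+1}, m_{j+2},...,m_k)). -/
noncomputable def cfRev (q : ℝ) : List ℤ → ℝ
  | [] => 0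
  | [a] => (a : ℝ)
  | a :: b :: rest => (a : ℝ) + 1 / (q * cfRev q (b :: rest))

/-- `cf q [m₀, …, m_k]` is the continued fraction `m_k + 1/(q m_{k-1} + q/( … + q/(q m₀)))`. -/
noncomputable def cf (q : ℝ) (l : List ℤ) : ℝ := cfRev q l.reverse

/-- `l` is a path for `q`: all denominators nonzero, i.e. every proper nonempty prefix
has nonzero continued-fraction value. -/
def IsPath (q : ℝ) (l : List ℤ) : Prop :=
  l ≠ [] ∧ ∀ t : List ℤ, t ≠ [] → t <+: l → t.length < l.length → cf q t ≠ 0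

/-- all entries except possibly the last are nonzero -/
def IsProper (l : List ℤ) : Prop := ∀ i, i + 1 < l.length → l.getD i 0 ≠ 0

def IsLoop (q : ℝ) (l : List ℤ) : Prop := IsPath q l ∧ cf q l = 0

/-- the weight `q^{k/2} ∏_{j<k} |c(q, m_j)|`. -/
noncomputable def weight (q : ℝ) (l : List ℤ) : ℝ :=
  Real.sqrt (q ^ (l.length - 1)) * ∏ j ∈ Finset.range (l.length - 1), |cf q (l.take (j + 1))|

/-- composition of paths -/
def comp (m n : List ℤ) : List ℤ := m.dropLast ++ (m.getLastD 0 + n.headD 0) :: n.tail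

/-- one step of zero-skipping -/
def SkipStep (l l' : List ℤ) : Prop :=
  ∃ (u v : List ℤ) (x y : ℤ), l = u ++ x :: 0 :: y :: v ∧ l' = u ++ (x + y) :: v

/-- the weight `w_q` is unique -/
def WeightUnique (q : ℝ) : Prop :=
  ∀ m n : List ℤ, IsPath q m → IsProper m → IsPath q n → IsProper n →
    cf q m = cf q n → weight q m = weight q n

lemma cfRev_cons (q : ℝ) (a : ℤ) (s : List ℤ) (hs : s ≠ []) :
    cfRev q (a :: s) = (a : ℝ) + 1 / (q * cfRev q s) := by
  cases s with
  | nil => exact absurd rfl hs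
  | cons b t => rfl

lemma cfRev_skip (q : ℝ) (hq : q ≠ 0) (x y : ℤ) (w : List ℤ)
    (hx : cfRev q (x :: w) ≠ 0) :
    cfRev q (y :: (0:ℤ) :: x :: w) = (y : ℝ) + cfRev q (x :: w) := by
  have h0 : cfRev q ((0:ℤ) :: x :: w) = 1 / (q * cfRev q (x :: w)) := by
    rw [cfRev_cons q 0 (x :: w) (by simp)]; push_cast; ring
  rw [cfRev_cons q y ((0:ℤ) :: x :: w) (by simp), h0]
  field_simp

lemma cfRev_skip_append (q : ℝ) (hq : q ≠ 0) (x y : ℤ) (w p : List ℤ)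
    (hx : cfRev q (x :: w) ≠ 0) :
    cfRev q (p ++ y :: (0:ℤ) :: x :: w) = cfRev q (p ++ (x + y) :: w) := by
  induction p with
  | nil =>
      simp only [List.nil_append]
      rw [cfRev_skip q hq x y w hx]
      cases w with
      | nil => simp [cfRev]; push_cast; ring
      | cons b t =>
          rw [cfRev_cons q x (b :: t) (by simp), cfRev_cons q (x + y) (b :: t) (by simp)]
          push_cast; ring
  | cons a p ih =>
      rw [List.cons_append, List.cons_append,
        cfRev_cons q a _ (by simp), cfRev_cons q a _ (by simp), ih]

theorem stmt1 (q : ℝ) (hq : 0 < q) (u v : List ℤ) (x y : ℤ)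
    (h1 : IsPath q (u ++ x :: 0 :: y :: v)) (h2 : IsPath q (u ++ (x + y) :: v)) :
    cf q (u ++ x :: 0 :: y :: v) = cf q (u ++ (x + y) :: v) := by
  have hq0 : q ≠ 0 := ne_of_gt hq
  have hxpre : cf q (u ++ [x]) ≠ 0 := by
    apply h1.2 (u ++ [x]) (by simp)
    · exact ⟨(0:ℤ) :: y :: v, by simp⟩
    · simp
  unfold cf at hxpre ⊢
  have hrev : (u ++ [x]).reverse = x :: u.reverse := by simp
  rw [hrev] at hxpre
  have h3 : (u ++ x :: (0:ℤ) :: y :: v).reverse = v.reverse ++ y :: (0:ℤ) :: x :: u.reverse := by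
    simp
  have h4 : (u ++ (x + y) :: v).reverse = v.reverse ++ (x + y) :: u.reverse := by simp
  rw [h3, h4, cfRev_skip_append q hq0 x y u.reverse v.reverse hxpre]
end

section
/- Let q > 0 and let m = (m_0,...,m_k) be a loop for q (i.e., a path with c(q,m) = 0) and let n = (n_0,...,n_ℓ) be a path for q. Then the composition mn = (m_0,...,m_{k-1}, m_k + n_0, n_1,...,n_ℓ) is a path for q, and for each j with 0 ≤ j ≤ ℓ, c(q, (m_0,...,m_k+n_0,...,n_j)) = c(q, n_j), where n_j = (n_0,...,n_j). In particular c(q, mn) = c(q, n). -/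
lemma cf_singleton (q : ℝ) (a : ℤ) : cf q [a] = a := rfl

lemma cf_concat (q : ℝ) (t : List ℤ) (ht : t ≠ []) (a : ℤ) :
    cf q (t ++ [a]) = a + 1 / (q * cf q t) := by
  unfold cf
  rw [List.reverse_append]
  obtain ⟨b, rest, hb⟩ : ∃ b rest, t.reverse = b :: rest := by
    cases h : t.reverse with
    | nil => exact absurd (List.reverse_eq_nil_iff.mp h) ht
    | cons b rest => exact ⟨b, rest, rfl⟩
  rw [hb]
  rfl

lemma cf_comp_aux (q : ℝ) (d : List ℤ) (a n0 : ℤ) (hm : cf q (d ++ [a]) = 0)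
    (s : List ℤ) : cf q (d ++ (a + n0) :: s) = cf q (n0 :: s) := by
  induction s using List.reverseRecOn with
  | nil =>
    cases d with
    | nil =>
      have h1 : cf q [a] = 0 := hm
      rw [cf_singleton] at h1
      show cf q [a + n0] = cf q [n0]
      rw [cf_singleton, cf_singleton]
      push_cast
      linarith
    | cons x xs =>
      have h2 : cf q ((x :: xs) ++ [a]) = a + 1 / (q * cf q (x :: xs)) :=
        cf_concat q _ (by simp) _
      rw [h2] at hm
      show cf q ((x :: xs) ++ [a + n0]) = cf q [n0]
      rw [cf_concat q _ (by simp), cf_singleton]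
      push_cast
      linarith
  | append_singleton s b ih =>
    have e1 : d ++ (a + n0) :: (s ++ [b]) = (d ++ (a + n0) :: s) ++ [b] := by simp
    have e2 : n0 :: (s ++ [b]) = (n0 :: s) ++ [b] := by simp
    rw [e1, e2, cf_concat q _ (by simp) b, cf_concat q _ (by simp) b, ih]

lemma take_helper {α : Type*} (d : List α) (x : α) (ns : List α) (j : ℕ) :
    (d ++ x :: ns).take (d.length + 1 + j) = d ++ x :: ns.take j := by
  have : d.length + 1 + j = d.length + (j + 1) := by omega
  rw [this, List.take_append, List.take_of_length_le (by omega), Nat.add_sub_cancel_left, List.take_succ_cons]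

theorem stmt2 (q : ℝ) (hq : 0 < q) (m n : List ℤ) (hm : IsLoop q m) (hn : IsPath q n) :
    IsPath q (comp m n) ∧
    (∀ j < n.length, cf q ((comp m n).take (m.length + j)) = cf q (n.take (j + 1))) ∧
    cf q (comp m n) = cf q n := by
  obtain ⟨⟨hmne, hmpre⟩, hm0⟩ := hm
  obtain ⟨hnne, hnpre⟩ := hn
  obtain ⟨n0, ns, rfl⟩ := List.exists_cons_of_ne_nil hnne
  set d := m.dropLast with hd
  set a := m.getLastD 0 with ha
  have hmd : d ++ [a] = m := by
    rw [hd, ha, List.getLastD_eq_getLast?, List.getLast?_eq_getLast hmne]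
    exact List.dropLast_append_getLast hmne
  have hlen : m.length = d.length + 1 := by
    rw [← hmd]; simp
  have hcomp : comp m (n0 :: ns) = d ++ (a + n0) :: ns := by
    simp [comp, ha, hd, List.getLastD_eq_getLast?]
  have hkey : ∀ s : List ℤ, cf q (d ++ (a + n0) :: s) = cf q (n0 :: s) := by
    intro s
    exact cf_comp_aux q d a n0 (by rw [hmd]; exact hm0) s
  have htake : ∀ j, (comp m (n0 :: ns)).take (m.length + j) = d ++ (a + n0) :: ns.take j := by
    intro j
    rw [hcomp, hlen, take_helper]
  have hmain : ∀ j < (n0 :: ns).length,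
      cf q ((comp m (n0 :: ns)).take (m.length + j)) = cf q ((n0 :: ns).take (j + 1)) := by
    intro j _
    rw [htake, hkey, List.take_succ_cons]
  refine ⟨⟨by rw [hcomp]; simp, ?_⟩, hmain, ?_⟩
  · intro t htne htpre htlen
    rw [hcomp] at htpre htlen
    rcases le_or_gt t.length d.length with hle | hlt
    · have htd : t <+: d := by
        refine List.prefix_of_prefix_length_le htpre ?_ (by simpa using hle)
        exact (List.prefix_append d _)
      have htm : t <+: m := by
        rw [← hmd]; exact htd.trans (List.prefix_append d [a])
      exact hmpre t htne htm (by omega)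
    · obtain ⟨j, hj⟩ : ∃ j, t.length = d.length + 1 + j := ⟨t.length - d.length - 1, by omega⟩
      have hjlt : j < ns.length := by
        simp only [List.length_append, List.length_cons] at htlen
        omega
      have ht : t = d ++ (a + n0) :: ns.take j := by
        rw [List.prefix_iff_eq_take] at htpre
        rw [htpre, hj, take_helper]
      rw [ht, hkey]
      have : (n0 :: ns.take j) = (n0 :: ns).take (j + 1) := by
        rw [List.take_succ_cons]
      rw [this]
      refine hnpre _ (by simp) (List.take_prefix _ _) ?_
      simp only [List.length_take, List.length_cons]
      omega
  · have hfull : (comp m (n0 :: ns)).take (m.length + ns.length) = comp m (n0 :: ns) := by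
      apply List.take_of_length_le
      rw [hcomp]
      simp only [List.length_append, List.length_cons, hlen]
      omega
    have h := hmain ns.length (by simp)
    rw [hfull] at h
    rw [h, List.take_of_length_le (by simp)]
end

section
/- Let q > 0. If m = (m_0,...,m_k) is a loop for q, then (-m_k,...,-m_0) is also a loop for q, and it is the inverse of m in the group of proper loops under composition with zero-skipping. -/
lemma cf_snoc (q : ℝ) (s : List ℤ) (hs : s ≠ []) (a : ℤ) :
    cf q (s ++ [a]) = a + 1 / (q * cf q s) := by
  obtain ⟨b, t, hbt⟩ : ∃ b t, s.reverse = b :: t := by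
    cases h : s.reverse with
    | nil => exact absurd (by simpa using congrArg List.reverse h) hs
    | cons b t => exact ⟨b, t, rfl⟩
  simp only [cf, List.reverse_append, List.reverse_cons, List.reverse_nil, List.nil_append,
    List.singleton_append, hbt, cfRev]

/-- 2×2 real matrix as a structure: [[a,b],[c,d]] -/
@[ext] structure M2 where
  a : ℝ
  b : ℝ
  c : ℝ
  d : ℝ

def M2.mul (X Y : M2) : M2 :=
  ⟨X.a*Y.a + X.b*Y.c, X.a*Y.b + X.b*Y.d, X.c*Y.a + X.d*Y.c, X.c*Y.b + X.d*Y.d⟩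

lemma M2.mul_assoc (X Y Z : M2) : (X.mul Y).mul Z = X.mul (Y.mul Z) := by
  ext <;> simp [M2.mul] <;> ring

def bm (q : ℝ) (x : ℤ) : M2 := ⟨q*x, 1, q, 0⟩

def Gm (q : ℝ) : List ℤ → M2
  | [] => ⟨1, 0, 0, 1⟩
  | x :: r => (Gm q r).mul (bm q x)

lemma Gm_nil (q : ℝ) : Gm q [] = ⟨1,0,0,1⟩ := rfl
lemma Gm_cons (q : ℝ) (x : ℤ) (r : List ℤ) : Gm q (x :: r) = (Gm q r).mul (bm q x) := rfl

lemma Gm_append (q : ℝ) (u v : List ℤ) : Gm q (u ++ v) = (Gm q v).mul (Gm q u) := by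
  induction u with
  | nil => ext <;> simp [Gm_nil, M2.mul]
  | cons x u ih =>
      simp only [List.cons_append, Gm_cons, ih, M2.mul_assoc]

lemma Gm_snoc (q : ℝ) (l : List ℤ) (x : ℤ) : Gm q (l ++ [x]) = (bm q x).mul (Gm q l) := by
  rw [Gm_append]
  congr 1
  ext <;> simp [Gm_cons, Gm_nil, bm, M2.mul]

lemma Gm_det (q : ℝ) (l : List ℤ) :
    (Gm q l).a * (Gm q l).d - (Gm q l).b * (Gm q l).c = (-q) ^ l.length := by
  induction l with
  | nil => simp [Gm_nil]
  | cons x r ih =>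
      simp only [Gm_cons, M2.mul, bm, List.length_cons, pow_succ]
      rw [← ih]; ring

lemma cfG (q : ℝ) (hq : 0 < q) :
    ∀ l : List ℤ, l ≠ [] →
    (∀ t, t ≠ [] → t <+: l → t.length < l.length → cf q t ≠ 0) →
    (Gm q l).c ≠ 0 ∧ cf q l = (Gm q l).a / (Gm q l).c := by
  intro l
  induction l using List.reverseRecOn with
  | nil => intro h; exact absurd rfl h
  | append_singleton s x ih =>
      intro _ h
      rcases eq_or_ne s [] with rfl | hs
      · refine ⟨?_, ?_⟩
        · show (Gm q [x]).c ≠ 0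
          simp only [Gm_cons, Gm_nil, M2.mul, bm]
          simpa using hq.ne'
        · show cf q [x] = (Gm q [x]).a / (Gm q [x]).c
          simp only [Gm_cons, Gm_nil, M2.mul, bm, cf_singleton]
          field_simp
          ring
      · have hpre : s <+: s ++ [x] := ⟨[x], rfl⟩
        have hlen : s.length < (s ++ [x]).length := by simp
        have hcfs : cf q s ≠ 0 := h s hs hpre hlen
        obtain ⟨hc, hcf⟩ := ih hs
          (fun t ht hp hl => h t ht (hp.trans hpre) (lt_trans hl hlen))
        have ha : (Gm q s).a ≠ 0 := by
          intro h0; exact hcfs (by rw [hcf, h0, zero_div])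
        rw [Gm_snoc]
        have hq0 : q ≠ 0 := hq.ne'
        refine ⟨?_, ?_⟩
        · show q * (Gm q s).a + 0 * (Gm q s).c ≠ 0
          simpa using mul_ne_zero hq0 ha
        · rw [cf_snoc q s hs x, hcf]
          show (x : ℝ) + 1 / (q * ((Gm q s).a / (Gm q s).c))
              = (q*x*(Gm q s).a + 1*(Gm q s).c) / (q*(Gm q s).a + 0*(Gm q s).c)
          field_simp
          ring

lemma loop_entries (q : ℝ) (hq : 0 < q) (m : List ℤ) (hm : IsLoop q m) :
    (Gm q m).a = 0 ∧ (Gm q m).b ≠ 0 ∧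
    ∀ u v : List ℤ, m = u ++ v → u ≠ [] → v ≠ [] →
      (Gm q v).a ≠ 0 ∧ (Gm q v).b ≠ 0 := by
  obtain ⟨⟨hne, hpath⟩, hcf0⟩ := hm
  obtain ⟨hc, hcf⟩ := cfG q hq m hne hpath
  have hA : (Gm q m).a = 0 := by
    rw [hcf] at hcf0
    rcases div_eq_zero_iff.mp hcf0 with h | h
    · exact h
    · exact absurd h hc
  have hdm := Gm_det q m
  have hpow : (-q) ^ m.length ≠ 0 := pow_ne_zero _ (neg_ne_zero.mpr hq.ne')
  have hB : (Gm q m).b ≠ 0 := by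
    intro h0
    rw [hA, h0] at hdm
    simp at hdm
    exact hpow hdm.symm
  refine ⟨hA, hB, ?_⟩
  intro u v hmeq hu hv
  have hupre : u <+: m := ⟨v, hmeq.symm⟩
  have hulen : u.length < m.length := by
    rw [hmeq, List.length_append]
    have : 0 < v.length := List.length_pos_iff.mpr hv
    omega
  obtain ⟨hcu, hcfu⟩ := cfG q hq u hu
    (fun t ht hp hl => hpath t ht (hp.trans hupre) (lt_trans hl hulen))
  have hau : (Gm q u).a ≠ 0 := by
    intro h0
    exact hpath u hu hupre hulen (by rw [hcfu, h0, zero_div])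
  have hGuv : Gm q m = (Gm q v).mul (Gm q u) := by rw [hmeq, Gm_append]
  have h0 : (Gm q v).a * (Gm q u).a + (Gm q v).b * (Gm q u).c = 0 := by
    have := congrArg M2.a hGuv
    rw [hA] at this
    simpa [M2.mul] using this.symm
  have hdv := Gm_det q v
  have hpowv : (-q) ^ v.length ≠ 0 := pow_ne_zero _ (neg_ne_zero.mpr hq.ne')
  constructor
  · intro hva
    have hvb : (Gm q v).b ≠ 0 := by
      intro hvb
      rw [hva, hvb] at hdv
      simp at hdv
      exact hpowv hdv.symm
    rw [hva] at h0
    simp at h0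
    rcases h0 with h0 | h0
    · exact hvb h0
    · exact hcu h0
  · intro hvb
    rw [hvb] at h0
    simp at h0
    rcases h0 with h0 | h0
    · rw [h0, hvb] at hdv
      simp at hdv
      exact hpowv hdv.symm
    · exact hau h0

def negRev (l : List ℤ) : List ℤ := (l.map fun x => -x).reverse

lemma negRev_cons (x : ℤ) (r : List ℤ) : negRev (x :: r) = negRev r ++ [-x] := by
  simp [negRev]

lemma negRev_length (l : List ℤ) : (negRev l).length = l.length := by simp [negRev]

lemma negRev_key (q : ℝ) (hq : 0 < q) :
    ∀ v : List ℤ, v ≠ [] →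
    (∀ v', v' <:+ v → v' ≠ [] → v'.length < v.length →
      (Gm q v').a ≠ 0 ∧ (Gm q v').b ≠ 0) →
    (Gm q v).b ≠ 0 →
    IsPath q (negRev v) ∧ cf q (negRev v) = -(Gm q v).a / (q * (Gm q v).b) := by
  intro v
  induction v with
  | nil => intro h; exact absurd rfl h
  | cons x r ih =>
      intro _ hsuf hb
      rcases eq_or_ne r [] with rfl | hr
      · constructor
        · refine ⟨by simp [negRev], ?_⟩
          intro t ht _ hl
          rw [negRev_length] at hl
          simp only [List.length_cons, List.length_nil] at hl
          interval_cases h : t.length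
          · exact absurd (List.length_eq_zero_iff.mp h) ht
        · show cf q [-x] = -(Gm q [x]).a / (q * (Gm q [x]).b)
          rw [cf_singleton]
          simp only [Gm_cons, Gm_nil, M2.mul, bm]
          push_cast
          field_simp
          ring
      · have hrsuf : r <:+ x :: r := ⟨[x], rfl⟩
        have hrlen : r.length < (x :: r).length := by simp
        obtain ⟨hra, hrb⟩ := hsuf r hrsuf hr hrlen
        obtain ⟨hpathr, hcfr⟩ := ih hr
          (fun v' hs hn hl => hsuf v' (hs.trans hrsuf) hn (lt_trans hl hrlen)) hrb
        have hcfr0 : cf q (negRev r) ≠ 0 := by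
          rw [hcfr]
          exact div_ne_zero (neg_ne_zero.mpr hra) (mul_ne_zero hq.ne' hrb)
        have hwne : negRev r ≠ [] := hpathr.1
        constructor
        · refine ⟨by rw [negRev_cons]; simp, ?_⟩
          intro t ht hp hl
          rw [negRev_cons] at hp
          rw [negRev_cons, List.length_append, List.length_singleton] at hl
          have hle : t.length ≤ (negRev r).length := by omega
          have hpr : t <+: negRev r :=
            List.prefix_of_prefix_length_le hp (List.prefix_append _ _) hle
          rcases lt_or_eq_of_le hle with hlt | heq
          · exact hpathr.2 t ht hpr hlt
          · rw [hpr.eq_of_length heq]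
            exact hcfr0
        · rw [negRev_cons, cf_snoc q _ hwne, hcfr]
          show ((-x : ℤ) : ℝ) + 1 / (q * (-(Gm q r).a / (q * (Gm q r).b)))
              = -((Gm q r).a*(q*x) + (Gm q r).b*q) / (q * ((Gm q r).a*1 + (Gm q r).b*0))
          push_cast
          field_simp
          linear_combination ((x : ℝ) * (Gm q r).a + (Gm q r).b) * mul_inv_cancel₀ hra

lemma skip_aux : ∀ t : List ℤ,
    Relation.ReflTransGen SkipStep (t ++ 0 :: negRev t) [0] := by
  intro t
  induction t using List.reverseRecOn with
  | nil =>
      simp only [List.nil_append, negRev, List.map_nil, List.reverse_nil]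
      exact Relation.ReflTransGen.refl
  | append_singleton s x ih =>
      have hrw : negRev (s ++ [x]) = -x :: negRev s := by simp [negRev]
      have step : SkipStep (s ++ [x] ++ 0 :: negRev (s ++ [x])) (s ++ 0 :: negRev s) := by
        refine ⟨s, negRev s, x, -x, ?_, ?_⟩
        · rw [hrw]; simp
        · simp
      exact Relation.ReflTransGen.head step ih


theorem stmt4 (q : ℝ) (hq : 0 < q) (m : List ℤ) (hm : IsLoop q m) :
    IsLoop q ((m.map (fun x => -x)).reverse) ∧
    Relation.ReflTransGen SkipStep (comp m ((m.map (fun x => -x)).reverse)) [0] := by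
  obtain ⟨hA, hB, hS⟩ := loop_entries q hq m hm
  have hne : m ≠ [] := hm.1.1
  have hsufh : ∀ v', v' <:+ m → v' ≠ [] → v'.length < m.length →
      (Gm q v').a ≠ 0 ∧ (Gm q v').b ≠ 0 := by
    rintro v' ⟨u, hu⟩ hn hl
    refine hS u v' hu.symm ?_ hn
    intro hu0
    rw [hu0, List.nil_append] at hu
    rw [hu] at hl
    exact lt_irrefl _ hl
  obtain ⟨hpath', hcf'⟩ := negRev_key q hq m hne hsufh hB
  constructor
  · exact ⟨hpath', by rw [show ((m.map (fun x => -x)).reverse) = negRev m from rfl,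
      hcf', hA, neg_zero, zero_div]⟩
  · obtain ⟨s, x, hm2⟩ : ∃ s x, m = s ++ [x] := by
      rcases List.eq_nil_or_concat m with rfl | ⟨s, x, h⟩
      · exact absurd rfl hne
      · exact ⟨s, x, by simpa using h⟩
    subst hm2
    have hrw : ((s ++ [x]).map (fun x => -x)).reverse = -x :: negRev s := by
      simp [negRev]
    have hc : comp (s ++ [x]) (((s ++ [x]).map (fun x => -x)).reverse)
        = s ++ 0 :: negRev s := by
      rw [hrw]
      simp [comp]
    rw [hc]
    exact skip_aux s
end

section
/- The vector m = (1, -1, -3) is a proper loop for q = 2/3, i.e., c(2/3, m) = 0 with all denominators nonzero, and its weight is w_{2/3}(m) = 1/3 ≠ 1. Consequently the weight w_{2/3} is not unique. -/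
lemma cf1 : cf (2/3) [1] = 1 := by norm_num [cf, cfRev]

lemma cf2 : cf (2/3) [1, -1] = 1/2 := by norm_num [cf, cfRev]

lemma cf3 : cf (2/3) [1, -1, -3] = 0 := by norm_num [cf, cfRev]

lemma path3 : IsPath (2/3) [1, -1, -3] := by
  constructor
  · simp
  · intro t ht hpre hlen
    have hte : t = List.take t.length [1, -1, -3] := List.prefix_iff_eq_take.mp hpre
    simp only [List.length_cons, List.length_nil] at hlen
    interval_cases h : t.length
    · simp at ht hte; exact absurd hte ht
    · rw [hte]; norm_num [cf, cfRev]
    · rw [hte]; norm_num [cf, cfRev]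

theorem stmt9 :
    IsPath (2 / 3) [1, -1, -3] ∧ IsProper [1, -1, -3] ∧ cf (2 / 3) [1, -1, -3] = 0 ∧
    weight (2 / 3) [1, -1, -3] = 1 / 3 ∧ ¬ WeightUnique (2 / 3) := by
  have hw : weight (2/3) [1, -1, -3] = 1/3 := by
    have : Real.sqrt ((4 : ℝ)/9) = 2/3 := by
      rw [show (4:ℝ)/9 = (2/3)^2 by norm_num, Real.sqrt_sq (by norm_num)]
    simp only [weight, List.length_cons, List.length_nil]
    norm_num only
    rw [Finset.prod_range_succ, Finset.prod_range_one]
    simp only [List.take, cf1, cf2]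
    rw [abs_of_pos (by norm_num : (0:ℝ) < 1/2)]
    norm_num
  refine ⟨path3, ?_, cf3, hw, ?_⟩
  · intro i hi
    simp only [List.length_cons, List.length_nil] at hi
    have : i < 2 := by omega
    interval_cases i <;> simp
  · intro h
    have hp0 : IsPath (2/3) [0] := ⟨by simp, by intro t ht hpre hlen; simp at hlen; exact absurd hlen ht⟩
    have := h [1, -1, -3] [0] path3 ?_ hp0 ?_ ?_
    · rw [hw] at this
      have h0 : weight (2/3) [0] = 1 := by norm_num [weight]
      rw [h0] at this; norm_num at this
    · intro i hi; simp only [List.length_cons, List.length_nil] at hi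
      have : i < 2 := by omega
      interval_cases i <;> simp
    · intro i hi; simp at hi
    · rw [cf3]; norm_num [cf, cfRev]
end

section
/- If m = (m_0,...,m_k) and n = (n_0,...,n_ℓ) are proper paths (integer vectors with all entries except possibly the last nonzero) and the rational functions R(x,m) and R(x,n) are equal as rational functions, then m = n. -/
/-- the rational function `R(x, (m₀,…,m_k)) = m_k + 1/(x m_{k-1} + x/( … + x/(x m₀)))`. -/
noncomputable def R (m : ℕ → ℤ) : ℕ → RatFunc ℚ
  | 0 => RatFunc.C ((m 0 : ℚ))
  | l + 1 => RatFunc.C ((m (l + 1) : ℚ)) + 1 / (RatFunc.X * R m l)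

open scoped Multiplicative

noncomputable instance : DecidableEq (RatFunc ℚ) := Classical.decEq _

noncomputable def vv : Valuation (RatFunc ℚ) (WithZero (Multiplicative ℤ)) := RatFunc.inftyValuation ℚ

lemma vv_C {a : ℚ} (ha : a ≠ 0) : vv (RatFunc.C a) = 1 := by
  have hC : RatFunc.C a ≠ 0 := fun h0 => ha (RatFunc.C.injective (by simpa using h0))
  rw [vv, RatFunc.inftyValuation_apply,
    RatFunc.inftyValuation_of_nonzero _ hC, RatFunc.intDegree_C, WithZero.exp_zero]

lemma vv_X : vv RatFunc.X = (Multiplicative.ofAdd (1 : ℤ) : Multiplicative ℤ) := by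
  rw [vv, RatFunc.inftyValuation_apply]
  exact RatFunc.inftyValuation.X ℚ

lemma coe_neg_one_lt_one :
    ((Multiplicative.ofAdd (-1 : ℤ) : Multiplicative ℤ) : (WithZero (Multiplicative ℤ))) < 1 := by
  rw [← WithZero.coe_one, WithZero.coe_lt_coe, ← ofAdd_zero, Multiplicative.ofAdd_lt]
  norm_num

lemma vv_inv_X_mul {f : RatFunc ℚ} (hf : vv f = 1) :
    vv (1 / (RatFunc.X * f)) = (Multiplicative.ofAdd (-1 : ℤ) : Multiplicative ℤ) := by
  rw [one_div, Valuation.map_inv, Valuation.map_mul, vv_X, hf, mul_one, ← WithZero.coe_inv,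
    ← ofAdd_neg]

lemma vv_R (n : ℕ → ℤ) : ∀ l, (∀ j ≤ l, n j ≠ 0) → vv (R n l) = 1
  | 0, h => by
    rw [show R n 0 = RatFunc.C ((n 0 : ℚ)) from rfl]
    exact vv_C (Int.cast_ne_zero.mpr (h 0 le_rfl))
  | l + 1, h => by
    have hprev : vv (R n l) = 1 := vv_R n l (fun j hj => h j (hj.trans (Nat.le_succ l)))
    rw [show R n (l + 1) = RatFunc.C ((n (l + 1) : ℚ)) + 1 / (RatFunc.X * R n l) from rfl]
    have h1 : vv (RatFunc.C ((n (l + 1) : ℚ))) = 1 :=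
      vv_C (Int.cast_ne_zero.mpr (h (l + 1) le_rfl))
    have h2 := vv_inv_X_mul hprev
    have hne : vv (RatFunc.C ((n (l + 1) : ℚ))) ≠ vv (1 / (RatFunc.X * R n l)) := by
      rw [h1, h2]; exact coe_neg_one_lt_one.ne'
    rw [vv.map_add_of_distinct_val hne, h1, h2, max_eq_left coe_neg_one_lt_one.le]

theorem stmt13 (m n : ℕ → ℤ) (k l : ℕ)
    (hm : ∀ j < k, m j ≠ 0) (hn : ∀ j < l, n j ≠ 0)
    (h : R m k = R n l) : k = l ∧ ∀ j ≤ k, m j = n j := by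
  induction k generalizing l m n with
  | zero =>
    cases l with
    | zero =>
      refine ⟨rfl, fun j hj => ?_⟩
      have hj0 : j = 0 := Nat.le_zero.mp hj
      subst hj0
      have h' : RatFunc.C ((m 0 : ℚ)) = RatFunc.C ((n 0 : ℚ)) := h
      have := (RatFunc.C (K := ℚ)).injective h'
      exact_mod_cast this
    | succ l =>
      exfalso
      have hRl : vv (R n l) = 1 := vv_R n l (fun j hj => hn j (Nat.lt_succ_of_le hj))
      have h' : RatFunc.C ((m 0 : ℚ)) - RatFunc.C ((n (l + 1) : ℚ)) =
          1 / (RatFunc.X * R n l) := by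
        have := h
        rw [show R m 0 = RatFunc.C ((m 0 : ℚ)) from rfl,
          show R n (l + 1) = RatFunc.C ((n (l + 1) : ℚ)) + 1 / (RatFunc.X * R n l) from rfl]
            at this
        linear_combination this
      have h2 := vv_inv_X_mul hRl
      rw [← h', ← map_sub] at h2
      by_cases hc : (m 0 : ℚ) - (n (l + 1) : ℚ) = 0
      · rw [hc, map_zero, map_zero] at h2
        exact (WithZero.coe_ne_zero h2.symm)
      · rw [vv_C hc] at h2
        exact coe_neg_one_lt_one.ne' h2
  | succ k ih =>
    cases l with
    | zero =>
      exfalso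
      have hRk : vv (R m k) = 1 := vv_R m k (fun j hj => hm j (Nat.lt_succ_of_le hj))
      have h' : RatFunc.C ((n 0 : ℚ)) - RatFunc.C ((m (k + 1) : ℚ)) =
          1 / (RatFunc.X * R m k) := by
        have := h
        rw [show R n 0 = RatFunc.C ((n 0 : ℚ)) from rfl,
          show R m (k + 1) = RatFunc.C ((m (k + 1) : ℚ)) + 1 / (RatFunc.X * R m k) from rfl]
            at this
        linear_combination -this
      have h2 := vv_inv_X_mul hRk
      rw [← h', ← map_sub] at h2
      by_cases hc : (n 0 : ℚ) - (m (k + 1) : ℚ) = 0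
      · rw [hc, map_zero, map_zero] at h2
        exact (WithZero.coe_ne_zero h2.symm)
      · rw [vv_C hc] at h2
        exact coe_neg_one_lt_one.ne' h2
    | succ l =>
      have hRk : vv (R m k) = 1 := vv_R m k (fun j hj => hm j (Nat.lt_succ_of_le hj))
      have hRl : vv (R n l) = 1 := vv_R n l (fun j hj => hn j (Nat.lt_succ_of_le hj))
      have h' : RatFunc.C ((m (k + 1) : ℚ)) + 1 / (RatFunc.X * R m k) =
          RatFunc.C ((n (l + 1) : ℚ)) + 1 / (RatFunc.X * R n l) := h
      -- first: the constant terms agree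
      have hab : (m (k + 1) : ℚ) = (n (l + 1) : ℚ) := by
        by_contra hc
        have hsub : RatFunc.C ((m (k + 1) : ℚ) - (n (l + 1) : ℚ)) =
            1 / (RatFunc.X * R n l) - 1 / (RatFunc.X * R m k) := by
          rw [map_sub]
          linear_combination h'
        have hle : vv (RatFunc.C ((m (k + 1) : ℚ) - (n (l + 1) : ℚ)))
            ≤ (Multiplicative.ofAdd (-1 : ℤ) : Multiplicative ℤ) := by
          rw [hsub]
          calc vv _ ≤ max (vv (1 / (RatFunc.X * R n l))) (vv (1 / (RatFunc.X * R m k))) :=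
                Valuation.map_sub _ _ _
            _ ≤ _ := by rw [vv_inv_X_mul hRl, vv_inv_X_mul hRk, max_self]
        rw [vv_C (sub_ne_zero.mpr hc)] at hle
        exact absurd hle (not_le.mpr coe_neg_one_lt_one)
      have hu : 1 / (RatFunc.X * R m k) = 1 / (RatFunc.X * R n l) := by
        rw [hab] at h'
        exact add_left_cancel h'
      have hRm0 : R m k ≠ 0 := by
        intro h0; rw [h0, map_zero] at hRk; exact one_ne_zero hRk.symm
      have hRn0 : R n l ≠ 0 := by
        intro h0; rw [h0, map_zero] at hRl; exact one_ne_zero hRl.symm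
      have hXm : RatFunc.X * R m k = RatFunc.X * R n l := by
        rw [one_div, one_div] at hu
        exact inv_injective hu
      have hR : R m k = R n l := mul_left_cancel₀ RatFunc.X_ne_zero hXm
      obtain ⟨hkl, hj⟩ := ih m n l (fun j hj => hm j (Nat.lt_succ_of_lt hj))
        (fun j hj => hn j (Nat.lt_succ_of_lt hj)) hR
      refine ⟨by omega, fun j hjk => ?_⟩
      rcases Nat.lt_succ_iff_lt_or_eq.mp (Nat.lt_succ_of_le hjk) with hlt | heq
      · exact hj j (by omega)
      · subst heq
        rw [hkl] at hab ⊢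
        exact_mod_cast hab
end

section
/- If q > 0 is transcendental, then every real number a can be represented as a = c(q,m) with a proper path m in at most one way. In particular, for transcendental q the weight w_q is unique. -/
open scoped Classical

noncomputable def cfRevF : List ℤ → RatFunc ℚ
  | [] => 0
  | [a] => (a : RatFunc ℚ)
  | a :: b :: rest => (a : RatFunc ℚ) + 1 / (RatFunc.X * cfRevF (b :: rest))

noncomputable abbrev vinf : Valuation (RatFunc ℚ) (WithZero (Multiplicative ℤ)) :=
  FunctionField.inftyValuation ℚ

lemma vinf_int (n : ℤ) (h : n ≠ 0) : vinf ((n : RatFunc ℚ)) = 1 := by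
  have h1 : ((n : RatFunc ℚ)) = RatFunc.C ((n : ℚ)) := (map_intCast (RatFunc.C (K := ℚ)) n).symm
  rw [h1]
  exact RatFunc.inftyValuation.C ℚ (by exact_mod_cast h)

lemma vinf_X : vinf (RatFunc.X) = Multiplicative.ofAdd (1 : ℤ) := by
  exact RatFunc.inftyValuation.X ℚ

lemma ofAdd_neg_one_lt_one :
    ((Multiplicative.ofAdd (1 : ℤ) : Multiplicative ℤ) : WithZero (Multiplicative ℤ))⁻¹ <
      (1 : WithZero (Multiplicative ℤ)) := by
  rw [← WithZero.coe_inv, ← WithZero.coe_one, WithZero.coe_lt_coe, ← ofAdd_neg, ← ofAdd_zero,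
    Multiplicative.ofAdd_lt]
  norm_num

lemma vinf_good (r : List ℤ) : r ≠ [] → (∀ x ∈ r, x ≠ 0) → vinf (cfRevF r) = 1 := by
  induction r with
  | nil => simp
  | cons a t ih =>
    intro _ hz
    cases t with
    | nil => simpa [cfRevF] using vinf_int a (hz a (by simp))
    | cons b s =>
      have hv : vinf (cfRevF (b :: s)) = 1 :=
        ih (by simp) (fun x hx => hz x (by simp [hx]))
      have heps : vinf (1 / (RatFunc.X * cfRevF (b :: s))) =
          ((Multiplicative.ofAdd (1 : ℤ) : Multiplicative ℤ) :
            WithZero (Multiplicative ℤ))⁻¹ := by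
        rw [one_div, map_inv₀, map_mul, vinf_X, hv, mul_one]
      have hlt : vinf (1 / (RatFunc.X * cfRevF (b :: s))) < vinf ((a : RatFunc ℚ)) := by
        rw [heps, vinf_int a (hz a (by simp))]
        exact ofAdd_neg_one_lt_one
      show vinf ((a : RatFunc ℚ) + 1 / (RatFunc.X * cfRevF (b :: s))) = 1
      rw [Valuation.map_add_eq_of_lt_left _ hlt, vinf_int a (hz a (by simp))]

lemma cfRevF_ne_zero (r : List ℤ) (h1 : r ≠ []) (h2 : ∀ x ∈ r, x ≠ 0) : cfRevF r ≠ 0 := by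
  intro h0
  have := vinf_good r h1 h2
  rw [h0, map_zero] at this
  exact zero_ne_one this

lemma cfRevF_inj : ∀ m n : List ℤ, m ≠ [] → n ≠ [] →
    (∀ x ∈ m.tail, x ≠ 0) → (∀ x ∈ n.tail, x ≠ 0) → cfRevF m = cfRevF n → m = n := by
  intro m
  induction m with
  | nil => intro n h; exact absurd rfl h
  | cons a m' ih =>
    intro n _ hn hm' hn' heq
    obtain ⟨b, n', rfl⟩ : ∃ b n'', n = b :: n'' := by
      cases n with
      | nil => exact absurd rfl hn
      | cons b n'' => exact ⟨b, n'', rfl⟩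
    -- helper for the asymmetric case
    have asymm : ∀ (x y : ℤ) (s : List ℤ) (c : ℤ),
        (∀ z ∈ c :: s, z ≠ 0) →
        cfRevF [x] = cfRevF (y :: c :: s) → False := by
      intro x y s c hcs hxy
      have hg : vinf (cfRevF (c :: s)) = 1 := vinf_good _ (by simp) hcs
      have hgne : cfRevF (c :: s) ≠ 0 := cfRevF_ne_zero _ (by simp) hcs
      have hXg : RatFunc.X * cfRevF (c :: s) ≠ 0 := mul_ne_zero RatFunc.X_ne_zero hgne
      have hεne : 1 / (RatFunc.X * cfRevF (c :: s)) ≠ 0 := one_div_ne_zero hXg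
      have hxy' : ((x - y : ℤ) : RatFunc ℚ) = 1 / (RatFunc.X * cfRevF (c :: s)) := by
        have : (x : RatFunc ℚ) = (y : RatFunc ℚ) + 1 / (RatFunc.X * cfRevF (c :: s)) := hxy
        push_cast
        linear_combination this
      have hne : (x - y : ℤ) ≠ 0 := by
        intro h0
        rw [h0] at hxy'
        exact hεne (by exact_mod_cast hxy'.symm)
      have h1 : vinf (((x - y : ℤ) : RatFunc ℚ)) = 1 := vinf_int _ hne
      have h2 : vinf (1 / (RatFunc.X * cfRevF (c :: s))) =
          ((Multiplicative.ofAdd (1 : ℤ) : Multiplicative ℤ) :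
            WithZero (Multiplicative ℤ))⁻¹ := by
        rw [one_div, map_inv₀, map_mul, vinf_X, hg, mul_one]
      rw [hxy', h2] at h1
      exact absurd h1 (ne_of_lt ofAdd_neg_one_lt_one)
    cases m' with
    | nil =>
      cases n' with
      | nil =>
        have hab0 : (a : RatFunc ℚ) = (b : RatFunc ℚ) := heq
        have hab : a = b := by
          by_contra hne
          have h0 : ((a - b : ℤ) : RatFunc ℚ) = 0 := by push_cast; rw [hab0]; ring
          have h := vinf_int (a - b) (sub_ne_zero.mpr hne)
          rw [h0, map_zero] at h
          exact zero_ne_one h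
        rw [hab]
      | cons d n2 => exact absurd (asymm a b n2 d hn' heq) id
    | cons c m2 =>
      cases n' with
      | nil => exact absurd (asymm b a m2 c hm' heq.symm) id
      | cons d n2 =>
        have hf : vinf (cfRevF (c :: m2)) = 1 := vinf_good _ (by simp) hm'
        have hg : vinf (cfRevF (d :: n2)) = 1 := vinf_good _ (by simp) hn'
        have hfne : cfRevF (c :: m2) ≠ 0 := cfRevF_ne_zero _ (by simp) hm'
        have hgne : cfRevF (d :: n2) ≠ 0 := cfRevF_ne_zero _ (by simp) hn'
        have heq' : (a : RatFunc ℚ) + 1 / (RatFunc.X * cfRevF (c :: m2)) =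
            (b : RatFunc ℚ) + 1 / (RatFunc.X * cfRevF (d :: n2)) := heq
        have hvf : vinf (1 / (RatFunc.X * cfRevF (c :: m2))) =
            ((Multiplicative.ofAdd (1 : ℤ) : Multiplicative ℤ) :
              WithZero (Multiplicative ℤ))⁻¹ := by
          rw [one_div, map_inv₀, map_mul, vinf_X, hf, mul_one]
        have hvg : vinf (1 / (RatFunc.X * cfRevF (d :: n2))) =
            ((Multiplicative.ofAdd (1 : ℤ) : Multiplicative ℤ) :
              WithZero (Multiplicative ℤ))⁻¹ := by
          rw [one_div, map_inv₀, map_mul, vinf_X, hg, mul_one]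
        have hab : a = b := by
          by_contra hab
          have hne : (a - b : ℤ) ≠ 0 := sub_ne_zero.mpr hab
          have h1 : vinf (((a - b : ℤ) : RatFunc ℚ)) = 1 := vinf_int _ hne
          have hsub : ((a - b : ℤ) : RatFunc ℚ) =
              1 / (RatFunc.X * cfRevF (d :: n2)) - 1 / (RatFunc.X * cfRevF (c :: m2)) := by
            push_cast
            linear_combination heq'
          have hle : vinf (((a - b : ℤ) : RatFunc ℚ)) ≤
              ((Multiplicative.ofAdd (1 : ℤ) : Multiplicative ℤ) :
                WithZero (Multiplicative ℤ))⁻¹ := by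
            rw [hsub]
            refine le_trans (Valuation.map_sub _ _ _) ?_
            rw [hvf, hvg, max_self]
          rw [h1] at hle
          exact absurd (lt_of_le_of_lt hle ofAdd_neg_one_lt_one) (lt_irrefl _)
        have hinv : 1 / (RatFunc.X * cfRevF (c :: m2)) =
            1 / (RatFunc.X * cfRevF (d :: n2)) := by
          have := heq'
          rw [hab] at this
          exact add_left_cancel this
        have hXX : RatFunc.X * cfRevF (c :: m2) = RatFunc.X * cfRevF (d :: n2) := by
          rw [one_div, one_div] at hinv
          exact inv_injective hinv
        have hfg : cfRevF (c :: m2) = cfRevF (d :: n2) :=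
          mul_left_cancel₀ RatFunc.X_ne_zero hXX
        have htails : c :: m2 = d :: n2 :=
          ih (d :: n2) (by simp) (by simp)
            (fun x hx => hm' x (List.mem_cons_of_mem _ hx))
            (fun x hx => hn' x (List.mem_cons_of_mem _ hx)) hfg
        rw [hab, htails]

noncomputable def phi (q : ℝ) (htr : Transcendental ℚ q) : RatFunc ℚ →+* ℝ :=
  IsFractionRing.lift (g := (Polynomial.aeval q : Polynomial ℚ →ₐ[ℚ] ℝ).toRingHom)
    (transcendental_iff_injective.mp htr)

lemma phi_X (q : ℝ) (htr : Transcendental ℚ q) : phi q htr RatFunc.X = q := by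
  rw [phi, ← RatFunc.algebraMap_X, IsFractionRing.lift_algebraMap]
  simp

lemma phi_cfRevF (q : ℝ) (htr : Transcendental ℚ q) (r : List ℤ)
    (h : ∀ s : List ℤ, s ≠ [] → s <:+ r → s.length < r.length → cfRev q s ≠ 0) :
    phi q htr (cfRevF r) = cfRev q r := by
  induction r with
  | nil => simp [cfRevF, cfRev]
  | cons a t ih =>
    cases t with
    | nil => simp [cfRevF, cfRev]
    | cons b s =>
      have hval : cfRev q (b :: s) ≠ 0 := h (b :: s) (by simp) ⟨[a], rfl⟩ (by simp)
      have hF : phi q htr (cfRevF (b :: s)) = cfRev q (b :: s) := by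
        apply ih
        intro s' hs1 hs2 hs3
        exact h s' hs1 (hs2.trans ⟨[a], rfl⟩) (lt_trans hs3 (by simp))
      show phi q htr ((a : RatFunc ℚ) + 1 / (RatFunc.X * cfRevF (b :: s))) =
        (a : ℝ) + 1 / (q * cfRev q (b :: s))
      rw [map_add, map_intCast, map_div₀, map_one, map_mul, phi_X, hF]

lemma prop_rev (l : List ℤ) (hp : IsProper l) : ∀ x ∈ l.reverse.tail, x ≠ 0 := by
  intro x hx
  rw [List.tail_reverse, List.mem_reverse] at hx
  obtain ⟨i, hi, hix⟩ := List.mem_iff_getElem.mp hx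
  rw [List.length_dropLast] at hi
  have h0 := hp i (by omega)
  rw [List.getD_eq_getElem l 0 (by omega)] at h0
  rw [List.getElem_dropLast] at hix
  rw [← hix]
  exact h0

lemma main_inj (q : ℝ) (htr : Transcendental ℚ q) (m n : List ℤ)
    (hm : IsPath q m) (hpm : IsProper m) (hn : IsPath q n) (hpn : IsProper n)
    (hcf : cfRev q m.reverse = cfRev q n.reverse) : m = n := by
  have key : ∀ l : List ℤ, IsPath q l →
      phi q htr (cfRevF l.reverse) = cfRev q l.reverse := by
    intro l hl
    apply phi_cfRevF
    intro s hs1 hs2 hs3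
    have h1 : s.reverse <+: l := by
      rw [← List.reverse_suffix]
      simpa using hs2
    have h2 := hl.2 s.reverse (by simpa using hs1) h1 (by simpa using hs3)
    simpa [cf] using h2
  have heqF : cfRevF m.reverse = cfRevF n.reverse := by
    apply (phi q htr).injective
    rw [key m hm, key n hn, hcf]
  have := cfRevF_inj m.reverse n.reverse (by simpa using hm.1) (by simpa using hn.1)
    (prop_rev m hpm) (prop_rev n hpn) heqF
  exact List.reverse_injective this

theorem stmt14 (q : ℝ) (hq : 0 < q) (htr : Transcendental ℚ q) :
    (∀ m n : List ℤ, IsPath q m → IsProper m → IsPath q n → IsProper n →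
      cf q m = cf q n → m = n) ∧ WeightUnique q := by
  refine ⟨fun m n hm hpm hn hpn hcf => main_inj q htr m n hm hpm hn hpn hcf, ?_⟩
  intro m n hm hpm hn hpn hcf
  rw [main_inj q htr m n hm hpm hn hpn hcf]
end

section
/- If q > 0 and there exists a loop for q of odd length, then 1/q is an algebraic integer. -/
open Polynomial in
noncomputable def upoly : List ℤ → Polynomial ℤ
  | [] => 1
  | [a] => Polynomial.C a
  | a :: b :: rest => Polynomial.C a * upoly (b :: rest) + Polynomial.X * upoly rest

noncomputable def prodc (q : ℝ) : List ℤ → ℝ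
  | [] => 1
  | a :: rest => cfRev q (a :: rest) * prodc q rest

open Polynomial in
theorem eval_upoly (q : ℝ) (hq : q ≠ 0) :
    ∀ L : List ℤ,
      (∀ s : List ℤ, s ≠ [] → s.length < L.length → s <:+ L → cfRev q s ≠ 0) →
      Polynomial.aeval (1/q) (upoly L) = prodc q L
  | [], _ => by simp [upoly, prodc]
  | [a], _ => by simp [upoly, prodc, cfRev]
  | a :: b :: rest, h => by
      have hb : cfRev q (b :: rest) ≠ 0 :=
        h (b :: rest) (by simp) (by simp) ⟨[a], rfl⟩
      have ih1 := eval_upoly q hq (b :: rest) (fun s hs hlen hsuf =>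
        h s hs (by simp at hlen ⊢; omega) (hsuf.trans ⟨[a], rfl⟩))
      have ih2 := eval_upoly q hq rest (fun s hs hlen hsuf =>
        h s hs (by simp at hlen ⊢; omega) (hsuf.trans ⟨[a, b], rfl⟩))
      show Polynomial.aeval (1/q) (upoly (a :: b :: rest)) = prodc q (a :: b :: rest)
      rw [upoly]
      simp only [map_add, map_mul, aeval_C, aeval_X, ih1, ih2, prodc, cfRev]
      field_simp
      simp only [algebraMap_int_eq, eq_intCast]
      ring

open Polynomial in
theorem upoly_spec (n : ℕ) : ∀ L : List ℤ,
    (L.length = 2*n → (upoly L).Monic ∧ (upoly L).degree = (n : ℕ)) ∧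
    (L.length = 2*n+1 → (upoly L).degree ≤ (n : ℕ)) := by
  induction n with
  | zero =>
    intro L
    constructor
    · intro h
      have : L = [] := List.length_eq_zero_iff.mp (by omega)
      subst this
      exact ⟨monic_one, by simp [upoly]⟩
    · intro h
      have h1 : L.length = 1 := by omega
      obtain ⟨a, rfl⟩ := List.length_eq_one_iff.mp h1
      simp only [upoly]; exact degree_C_le.trans (by simp)
  | succ n ih =>
    have heven : ∀ L : List ℤ, L.length = 2*(n+1) →
        (upoly L).Monic ∧ (upoly L).degree = ((n+1 : ℕ) : WithBot ℕ) := by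
      intro L hL
      match L with
      | [] => simp at hL
      | [a] => exact absurd hL (by simp; omega)
      | a :: b :: rest =>
        have hr : rest.length = 2*n := by simp at hL; omega
        obtain ⟨hmon, hdeg⟩ := (ih rest).1 hr
        have hodd : (upoly (b :: rest)).degree ≤ (n : ℕ) :=
          (ih (b :: rest)).2 (by simp [hr])
        have hmonX : (Polynomial.X * upoly rest).Monic := monic_X.mul hmon
        have hdegX : (Polynomial.X * upoly rest).degree = ((n+1 : ℕ) : WithBot ℕ) := by
          rw [degree_mul, degree_X, hdeg]
          push_cast
          ring
        have h1 : (Polynomial.C a * upoly (b :: rest)).degree ≤ (n : ℕ) :=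
          le_trans (degree_mul_le _ _)
            (le_trans (add_le_add degree_C_le hodd) (by simp))
        have hlt : (Polynomial.C a * upoly (b :: rest)).degree <
            (Polynomial.X * upoly rest).degree := by
          rw [hdegX]
          exact lt_of_le_of_lt h1 (by exact_mod_cast Nat.lt_succ_self n)
        constructor
        · rw [upoly]
          exact hmonX.add_of_right hlt
        · rw [upoly, degree_add_eq_right_of_degree_lt hlt, hdegX]
    intro L
    refine ⟨heven L, ?_⟩
    intro hL
    match L with
    | [] => simp at hL
    | [a] => exact absurd hL (by simp)
    | a :: b :: rest =>
      have hbr : (b :: rest).length = 2*(n+1) := by simp at hL ⊢; omega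
      have hrlen : rest.length = 2*n+1 := by simp at hL; omega
      obtain ⟨_, hdegbr⟩ := heven (b :: rest) hbr
      have hrest : (upoly rest).degree ≤ (n : ℕ) := (ih rest).2 hrlen
      rw [upoly]
      refine le_trans (degree_add_le _ _) (max_le ?_ ?_)
      · calc (Polynomial.C a * upoly (b :: rest)).degree
            ≤ (Polynomial.C a).degree + (upoly (b :: rest)).degree := degree_mul_le _ _
          _ ≤ 0 + ((n+1 : ℕ) : WithBot ℕ) := add_le_add degree_C_le (le_of_eq hdegbr)
          _ = ((n+1 : ℕ) : WithBot ℕ) := by simp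
      · calc (Polynomial.X * upoly rest).degree
            ≤ Polynomial.X.degree + (upoly rest).degree := degree_mul_le _ _
          _ ≤ 1 + (n : ℕ) := add_le_add degree_X_le hrest
          _ = ((n+1 : ℕ) : WithBot ℕ) := by push_cast; ring

theorem stmt16 (q : ℝ) (hq : 0 < q)
    (h : ∃ m : List ℤ, IsLoop q m ∧ Odd (m.length - 1)) :
    IsIntegral ℤ (1 / q) := by
  obtain ⟨l, ⟨⟨hne, hpref⟩, hcf⟩, hodd⟩ := h
  have hlpos : 0 < l.length := List.length_pos_iff.mpr hne
  obtain ⟨m, hm⟩ := hodd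
  have hlen : l.reverse.length = 2*(m+1) := by simp; omega
  have heval : Polynomial.aeval (1/q) (upoly l.reverse) = prodc q l.reverse := by
    refine eval_upoly q (ne_of_gt hq) l.reverse (fun s hs hlens hsuf => ?_)
    have hpre : s.reverse <+: l := by
      rw [← List.reverse_reverse l]
      exact List.reverse_prefix.mpr hsuf
    have := hpref s.reverse (by simpa using hs) hpre (by simpa using hlens)
    simpa [cf] using this
  have hzero : prodc q l.reverse = 0 := by
    have h0 : cfRev q l.reverse = 0 := hcf
    obtain ⟨a, rest, hrev⟩ := List.exists_cons_of_ne_nil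
      (fun hh : l.reverse = [] => hne (by simpa using hh))
    rw [hrev] at h0
    rw [hrev, prodc, h0, zero_mul]
  obtain ⟨hmon, _⟩ := (upoly_spec (m+1) l.reverse).1 hlen
  exact ⟨upoly l.reverse, hmon, by
    rw [← Polynomial.aeval_def, heval, hzero]⟩
end
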